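/- For every prime p > 3, the congruence (B+p)^p ≡ p²·B_{p-1} (mod p⁴) holds, where (B+p)^p denotes the symbolic expansion ∑_{k=0}^{p} C(p,k) p^(p-k) B_k with B_k the k-th Bernoulli number; precisely, the rational number ∑_{k=0}^{p} C(p,k) p^(p-k) B_k − p² B_{p-1} has numerator divisible by p⁴ (when written in lowest terms with denominator coprime to p). -/

import Mathlib

open Finset

/-- `q` is `p`-integral: some denominator prime to `p` clears it. -/
def PInt (p : ℕ) (q : ℚ) : Prop := ∃ a b : ℤ, ¬ ((p : ℤ) ∣ b) ∧ q * b = a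

lemma pint_intCast {p : ℕ} (hp : p.Prime) (a : ℤ) : PInt p (a : ℚ) :=
  ⟨a, 1, by simpa using (Nat.prime_iff_prime_int.mp hp).not_dvd_one, by simp⟩

lemma pint_natCast {p : ℕ} (hp : p.Prime) (a : ℕ) : PInt p (a : ℚ) := by
  simpa using pint_intCast hp (a : ℤ)

lemma pint_add {p : ℕ} (hp : p.Prime) {q r : ℚ} (hq : PInt p q) (hr : PInt p r) :
    PInt p (q + r) := by
  obtain ⟨a1, b1, hb1, e1⟩ := hq
  obtain ⟨a2, b2, hb2, e2⟩ := hr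
  refine ⟨a1 * b2 + a2 * b1, b1 * b2, ?_, ?_⟩
  · intro h
    rcases (Nat.prime_iff_prime_int.mp hp).dvd_mul.mp h with h | h <;> [exact hb1 h; exact hb2 h]
  · push_cast
    linear_combination (b2 : ℚ) * e1 + (b1 : ℚ) * e2

lemma pint_mul {p : ℕ} (hp : p.Prime) {q r : ℚ} (hq : PInt p q) (hr : PInt p r) :
    PInt p (q * r) := by
  obtain ⟨a1, b1, hb1, e1⟩ := hq
  obtain ⟨a2, b2, hb2, e2⟩ := hr
  refine ⟨a1 * a2, b1 * b2, ?_, ?_⟩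
  · intro h
    rcases (Nat.prime_iff_prime_int.mp hp).dvd_mul.mp h with h | h <;> [exact hb1 h; exact hb2 h]
  · push_cast
    linear_combination ((r * (b2:ℚ))) * e1 + (a1 : ℚ) * e2

lemma pint_sum {p : ℕ} (hp : p.Prime) {ι : Type*} (s : Finset ι) (f : ι → ℚ)
    (h : ∀ i ∈ s, PInt p (f i)) : PInt p (∑ i ∈ s, f i) := by
  classical
  induction s using Finset.induction_on with
  | empty => simpa using pint_intCast hp 0
  | insert _ _ hx ih =>
    rw [Finset.sum_insert hx]
    exact pint_add hp (h _ (mem_insert_self _ _))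
      (ih fun i hi => h i (mem_insert_of_mem hi))

lemma pint_inv_nat {p : ℕ} (hp : p.Prime) {m : ℕ} (hm : 0 < m) (hmp : m < p) :
    PInt p ((m : ℚ)⁻¹) := by
  refine ⟨1, m, ?_, ?_⟩
  · intro h
    have := Int.le_of_dvd (by exact_mod_cast hm) h
    omega
  · have hm : (m : ℚ) ≠ 0 := by positivity
    push_cast
    field_simp

/-- Weak von Staudt–Clausen: for `n + 1 < p`, `bernoulli n` is `p`-integral. -/
lemma pint_bernoulli {p : ℕ} (hp : p.Prime) : ∀ n : ℕ, n + 1 < p → PInt p (bernoulli n) := by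
  intro n
  induction n using Nat.strong_induction_on with
  | _ n IH =>
  intro hn
  have hp0 : (p : ℚ) ≠ 0 := Nat.cast_ne_zero.mpr (by omega)
  have hn1 : ((n : ℚ) + 1) ≠ 0 := by positivity
  haveI : Fact p.Prime := ⟨hp⟩
  -- the natural number N = ∑_{k<p} k^n is divisible by p
  set N : ℕ := ∑ k ∈ range p, k ^ n with hN
  have hpN : p ∣ N := by
    rw [← ZMod.natCast_eq_zero_iff]
    have hcast : ((N : ZMod p)) = ∑ k ∈ range p, (k : ZMod p) ^ n := by
      rw [hN]; push_cast; rfl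
    have hbij : ∑ k ∈ range p, (k : ZMod p) ^ n = ∑ x : ZMod p, x ^ n := by
      refine Finset.sum_nbij' (fun k => (k : ZMod p)) (fun x => x.val) ?_ ?_ ?_ ?_ ?_
      · intro a _; exact mem_univ _
      · intro x _; exact mem_range.mpr (ZMod.val_lt x)
      · intro a ha; exact ZMod.val_cast_of_lt (mem_range.mp ha)
      · intro x _; exact ZMod.natCast_zmod_val x
      · intro a _; rfl
    rw [hcast, hbij]
    have hcard : n < Fintype.card (ZMod p) - 1 := by
      rw [ZMod.card]; omega
    exact FiniteField.sum_pow_lt_card_sub_one (ZMod p) n hcard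
  obtain ⟨M, hM⟩ := hpN
  -- Faulhaber's formula
  have hF0 := sum_range_pow p n
  rw [Finset.sum_range_succ] at hF0
  have hLHS : ∑ k ∈ range p, (k : ℚ) ^ n = (p : ℚ) * (M : ℚ) := by
    have : ((N : ℕ) : ℚ) = ∑ k ∈ range p, (k : ℚ) ^ n := by rw [hN]; push_cast; rfl
    rw [← this, hM]; push_cast; ring
  have hlast : bernoulli n * ((n + 1).choose n : ℚ) * (p : ℚ) ^ (n + 1 - n) / ((n : ℚ) + 1)
      = bernoulli n * p := by
    rw [Nat.choose_succ_self_right]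
    have h1 : n + 1 - n = 1 := by omega
    rw [h1]
    push_cast
    field_simp
  have hS : ∑ i ∈ range n, bernoulli i * ((n + 1).choose i : ℚ) * (p : ℚ) ^ (n + 1 - i)
        / ((n : ℚ) + 1)
      = (∑ i ∈ range n, bernoulli i * ((n + 1).choose i : ℚ) * (p : ℚ) ^ (n - i)
        / ((n : ℚ) + 1)) * p := by
    rw [Finset.sum_mul]
    refine Finset.sum_congr rfl fun i hi => ?_
    have : n + 1 - i = (n - i) + 1 := by
      have := mem_range.mp hi; omega
    rw [this, pow_succ]
    ring
  rw [hLHS, hlast, hS] at hF0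
  -- now hF0 : p * M = (∑ ...) * p + bernoulli n * p
  set S : ℚ := ∑ i ∈ range n, bernoulli i * ((n + 1).choose i : ℚ) * (p : ℚ) ^ (n - i)
      / ((n : ℚ) + 1) with hSdef
  have key : bernoulli n = (M : ℚ) - S := by
    apply mul_right_cancel₀ hp0
    linear_combination -hF0
  rw [key]
  have hPS : PInt p S := by
    refine pint_sum hp _ _ fun i hi => ?_
    have hi' := mem_range.mp hi
    have h1 : PInt p (bernoulli i) := IH i hi' (by omega)
    have h2 : PInt p (((n + 1).choose i : ℚ)) := pint_natCast hp _
    have h3 : PInt p ((p : ℚ) ^ (n - i)) := by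
      have : ((p : ℚ)) ^ (n - i) = ((p ^ (n - i) : ℕ) : ℚ) := by push_cast; ring
      rw [this]; exact pint_natCast hp _
    have h4 : PInt p (((n : ℚ) + 1)⁻¹) := by
      have : ((n : ℚ) + 1) = ((n + 1 : ℕ) : ℚ) := by push_cast; ring
      rw [this]
      exact pint_inv_nat hp (by omega) (by omega)
    rw [div_eq_mul_inv]
    exact pint_mul hp (pint_mul hp (pint_mul hp h1 h2) h3) h4
  have hsub : (M : ℚ) - S = (M : ℚ) + (-1 : ℤ) * S := by push_cast; ring
  rw [hsub]
  exact pint_add hp (pint_natCast hp M) (pint_mul hp (pint_intCast hp (-1)) hPS)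

/-- From `q * b = p^4 * a` with `p ∤ b`, conclude `p^4 ∣ q.num`. -/
lemma dvd_num_of_good {p : ℕ} (hp : p.Prime) {q : ℚ} {a b : ℤ} (hb : ¬ ((p : ℤ) ∣ b))
    (h : q * b = (p : ℚ) ^ 4 * a) : ((p : ℤ) ^ 4) ∣ q.num := by
  have hden : (q.den : ℚ) ≠ 0 := by
    exact_mod_cast q.den_ne_zero
  have hq : (q.num : ℚ) = q * q.den := by
    have h := Rat.num_div_den q
    rwa [div_eq_iff hden] at h
  have hZ : q.num * b = (p : ℤ) ^ 4 * (a * q.den) := by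
    have : (q.num : ℚ) * b = ((p : ℤ) ^ 4 * (a * q.den) : ℤ) := by
      push_cast
      rw [hq]
      linear_combination (q.den : ℚ) * h
    exact_mod_cast this
  have hcop : IsCoprime ((p : ℤ) ^ 4) b :=
    (((Nat.prime_iff_prime_int.mp hp).coprime_iff_not_dvd).mpr hb).pow_left
  exact hcop.dvd_of_dvd_mul_right ⟨a * q.den, hZ⟩

lemma good_sum {p : ℕ} (hp : p.Prime) {ι : Type*} (s : Finset ι) (f : ι → ℚ)
    (h : ∀ i ∈ s, ∃ a b : ℤ, ¬ ((p : ℤ) ∣ b) ∧ f i * b = (p : ℚ) ^ 4 * a) :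
    ∃ a b : ℤ, ¬ ((p : ℤ) ∣ b) ∧ (∑ i ∈ s, f i) * b = (p : ℚ) ^ 4 * a := by
  classical
  induction s using Finset.induction_on with
  | empty => exact ⟨0, 1, by simpa using (Nat.prime_iff_prime_int.mp hp).not_dvd_one, by simp⟩
  | insert _ _ hx ih =>
    obtain ⟨a1, b1, hb1, e1⟩ := h _ (Finset.mem_insert_self _ _)
    obtain ⟨a2, b2, hb2, e2⟩ := ih fun i hi => h i (Finset.mem_insert_of_mem hi)
    refine ⟨a1 * b2 + a2 * b1, b1 * b2, ?_, ?_⟩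
    · intro hd
      rcases (Nat.prime_iff_prime_int.mp hp).dvd_mul.mp hd with hd | hd <;>
        [exact hb1 hd; exact hb2 hd]
    · rw [Finset.sum_insert hx]
      push_cast
      linear_combination (b2 : ℚ) * e1 + (b1 : ℚ) * e2

theorem symbolic_expansion_cong (p : ℕ) (hp : p.Prime) (h3 : 3 < p) :
    ((p : ℤ) ^ 4) ∣
      ((∑ k ∈ Finset.range (p + 1),
          (p.choose k : ℚ) * (p : ℚ) ^ (p - k) * bernoulli k)
        - (p : ℚ) ^ 2 * bernoulli (p - 1)).num := by
  obtain ⟨m, rfl⟩ : ∃ m, p = m + 4 := ⟨p - 4, by omega⟩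
  have hodd : Odd (m + 4) := hp.odd_of_ne_two (by omega)
  -- peel off the top three terms
  rw [show m + 4 + 1 = (m + 2) + 1 + 1 + 1 from rfl, Finset.sum_range_succ,
    Finset.sum_range_succ, Finset.sum_range_succ]
  have hB1 : bernoulli (m + 2) = 0 := by
    rw [bernoulli_eq_bernoulli'_of_ne_one (by omega)]
    refine bernoulli'_eq_zero_of_odd ?_ (by omega)
    obtain ⟨t, ht⟩ := hodd
    exact ⟨t - 1, by omega⟩
  have hB2 : bernoulli (m + 2 + 1 + 1) = 0 := by
    rw [bernoulli_eq_bernoulli'_of_ne_one (by omega)]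
    have h : m + 2 + 1 + 1 = m + 4 := by omega
    rw [h]
    exact bernoulli'_eq_zero_of_odd hodd (by omega)
  have hcancel : ((m + 4).choose (m + 2 + 1) : ℚ) * ((m + 4 : ℕ) : ℚ) ^ (m + 4 - (m + 2 + 1))
        * bernoulli (m + 2 + 1) - ((m + 4 : ℕ) : ℚ) ^ 2 * bernoulli (m + 4 - 1) = 0 := by
    have h1 : (m + 4).choose (m + 3) = m + 4 := Nat.choose_succ_self_right (m + 3)
    have h2 : m + 4 - (m + 3) = 1 := by omega
    have h3 : m + 4 - 1 = m + 3 := by omega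
    rw [show m + 2 + 1 = m + 3 from rfl, h1, h2, h3]
    push_cast
    ring
  have hsplit : (∑ k ∈ Finset.range (m + 2),
          ((m + 4).choose k : ℚ) * ((m + 4 : ℕ) : ℚ) ^ (m + 4 - k) * bernoulli k)
        + ((m + 4).choose (m + 2) : ℚ) * ((m + 4 : ℕ) : ℚ) ^ (m + 4 - (m + 2))
          * bernoulli (m + 2)
        + ((m + 4).choose (m + 2 + 1) : ℚ) * ((m + 4 : ℕ) : ℚ) ^ (m + 4 - (m + 2 + 1))
          * bernoulli (m + 2 + 1)
        + ((m + 4).choose (m + 2 + 1 + 1) : ℚ) * ((m + 4 : ℕ) : ℚ) ^ (m + 4 - (m + 2 + 1 + 1))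
          * bernoulli (m + 2 + 1 + 1)
        - ((m + 4 : ℕ) : ℚ) ^ 2 * bernoulli (m + 4 - 1)
      = ∑ k ∈ Finset.range (m + 2),
          ((m + 4).choose k : ℚ) * ((m + 4 : ℕ) : ℚ) ^ (m + 4 - k) * bernoulli k := by
    rw [hB1, hB2]
    linear_combination hcancel
  rw [hsplit]
  -- now show each term of the remaining sum is p^4 * (p-integral)
  have hgood : ∃ a b : ℤ, ¬ (((m + 4 : ℕ) : ℤ) ∣ b) ∧
      (∑ k ∈ Finset.range (m + 2),
        ((m + 4).choose k : ℚ) * ((m + 4 : ℕ) : ℚ) ^ (m + 4 - k) * bernoulli k) * b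
        = ((m + 4 : ℕ) : ℚ) ^ 4 * a := by
    have hterm : ∀ k ∈ Finset.range (m + 2), ∃ a b : ℤ, ¬ (((m + 4 : ℕ) : ℤ) ∣ b) ∧
        (((m + 4).choose k : ℚ) * ((m + 4 : ℕ) : ℚ) ^ (m + 4 - k) * bernoulli k) * b
          = ((m + 4 : ℕ) : ℚ) ^ 4 * a := by
      intro k hk
      have hk' := mem_range.mp hk
      rcases Nat.eq_zero_or_pos k with rfl | hkpos
      · refine ⟨((m + 4 : ℕ) : ℤ) ^ m, 1, by simpa using (Nat.prime_iff_prime_int.mp hp).not_dvd_one, ?_⟩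
        rw [Nat.choose_zero_right, bernoulli_zero]
        push_cast
        rw [show (m + 4 : ℕ) = 4 + m from by omega, pow_add]
        ring
      · obtain ⟨c, hc⟩ := hp.dvd_choose_self (by omega) (by omega : k < m + 4)
        obtain ⟨a, b, hb, hab⟩ := pint_bernoulli hp k (by omega)
        refine ⟨(c : ℤ) * ((m + 4 : ℕ) : ℤ) ^ (m + 1 - k) * a, b, hb, ?_⟩
        have hcQ : (((m + 4).choose k : ℕ) : ℚ) = ((m + 4 : ℕ) : ℚ) * (c : ℚ) := by
          rw [hc]; push_cast; ring
        have hexp : m + 4 - k = (m + 1 - k) + 3 := by omega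
        rw [hcQ, hexp]
        push_cast
        linear_combination (((m : ℚ) + 4) * (c : ℚ)
          * ((m : ℚ) + 4) ^ ((m + 1 - k) + 3)) * hab
    exact good_sum hp _ _ hterm
  obtain ⟨a, b, hb, hab⟩ := hgood
  exact dvd_num_of_good hp hb hab
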